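/- arXiv:1404.5493 — 4 statements merged into one kernel-verified Lean document; each statement's English description precedes it below -/
import Mathlib

section
/- Let 0 < ρ < 1, let I be a compact interval, and let A ⊆ I be a measurable subset with |A| ≥ ρ|I|. Then there is a constant c depending only on ρ and k such that for every polynomial Q of degree at most k−1, sup_{t∈I} |Q(t)| ≤ c · sup_{t∈A} |Q(t)|. -/
open MeasureTheory Set

/-- Remez-type inequality: if `A ⊆ I` has measure at least `ρ|I|`, then for every
polynomial `Q` of degree at most `k-1`, `sup_I |Q| ≤ c(ρ,k) · sup_A |Q|`. -/
theorem polynomial_sup_bound (ρ : ℝ) (hρ0 : 0 < ρ) (hρ1 : ρ < 1) (k : ℕ) (hk : 1 ≤ k) :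
    ∃ c : ℝ, 0 < c ∧
      ∀ (a b : ℝ), a < b → ∀ A : Set ℝ, A ⊆ Set.Icc a b → MeasurableSet A →
        ρ * (volume (Set.Icc a b)).toReal ≤ (volume A).toReal →
        ∀ Q : Polynomial ℝ, Q.natDegree < k →
          ∀ t ∈ Set.Icc a b, |Q.eval t| ≤ c * sSup ((fun s => |Q.eval s|) '' A) := by
  have hk0 : (0:ℝ) < k := by exact_mod_cast hk
  refine ⟨k * (2*k/ρ)^(k-1), by positivity, ?_⟩
  intro a b hab A hA hAmeas hmeas Q hQ t ht
  have hba : (0:ℝ) < b - a := by linarith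
  rw [Real.volume_Icc, ENNReal.toReal_ofReal hba.le] at hmeas
  set δ : ℝ := ρ * (b-a) / (2*k) with hδdef
  have hδ : 0 < δ := by positivity
  -- Step 1: find k points of A pairwise δ-separated
  have key : ∀ n : ℕ, n ≤ k → ∃ S : Finset ℝ, ↑S ⊆ A ∧ S.card = n ∧
      ∀ x ∈ S, ∀ y ∈ S, x ≠ y → δ ≤ |x - y| := by
    intro n hn
    induction n with
    | zero => exact ⟨∅, by simp, rfl, by simp⟩
    | succ m ih =>
      obtain ⟨S, hSA, hcard, hsep⟩ := ih (by omega)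
      have hUvol : volume (⋃ s ∈ S, Metric.closedBall s δ) ≤ ENNReal.ofReal (m * (2*δ)) := by
        refine (measure_biUnion_finset_le _ _).trans ?_
        have : ∀ s ∈ S, volume (Metric.closedBall s δ) = ENNReal.ofReal (2*δ) := by
          intro s _; rw [Real.volume_closedBall]
        rw [Finset.sum_congr rfl this, Finset.sum_const, hcard, nsmul_eq_mul,
          ← ENNReal.ofReal_natCast m, ← ENNReal.ofReal_mul (Nat.cast_nonneg m)]
      have hne : (A \ ⋃ s ∈ S, Metric.closedBall s δ).Nonempty := by
        rw [Set.diff_nonempty]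
        intro hsub
        have h1 : volume A ≤ ENNReal.ofReal (m * (2*δ)) := (measure_mono hsub).trans hUvol
        have h2 : (volume A).toReal ≤ m * (2*δ) :=
          ENNReal.toReal_le_of_le_ofReal (by positivity) h1
        have hm : (m:ℝ) + 1 ≤ k := by exact_mod_cast hn
        have hδval : 2*δ = ρ*(b-a)/k := by rw [hδdef]; field_simp
        rw [hδval] at h2
        have hk0' : (0:ℝ) < k := hk0
        have : ρ*(b-a)*k ≤ m * (ρ*(b-a)) := by
          calc ρ*(b-a)*k ≤ (volume A).toReal * k := by nlinarith
            _ ≤ (m * (ρ*(b-a)/k)) * k := by nlinarith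
            _ = m * (ρ*(b-a)) := by field_simp
        nlinarith [mul_pos hρ0 hba]
      obtain ⟨x, hxA, hxU⟩ := hne
      have hxd : ∀ s ∈ S, δ < |x - s| := by
        intro s hs
        have hnb : x ∉ Metric.closedBall s δ := fun h => hxU (Set.mem_iUnion₂.mpr ⟨s, hs, h⟩)
        rw [Metric.mem_closedBall, not_le, Real.dist_eq] at hnb
        exact hnb
      have hxS : x ∉ S := by
        intro h
        have := hxd x h
        simp at this
        linarith
      refine ⟨insert x S, ?_, ?_, ?_⟩
      · rw [Finset.coe_insert, Set.insert_subset_iff]; exact ⟨hxA, hSA⟩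
      · rw [Finset.card_insert_of_notMem hxS, hcard]
      · intro u hu v hv huv
        rcases Finset.mem_insert.mp hu with rfl | hu' <;>
          rcases Finset.mem_insert.mp hv with rfl | hv'
        · exact absurd rfl huv
        · exact (hxd v hv').le
        · rw [abs_sub_comm]; exact (hxd u hu').le
        · exact hsep u hu' v hv' huv
  obtain ⟨S, hSA, hcard, hsep⟩ := key k le_rfl
  have hSI : ∀ s ∈ S, s ∈ Set.Icc a b := fun s hs => hA (hSA hs)
  set M := sSup ((fun s => |Q.eval s|) '' A) with hM
  have hbdd : BddAbove ((fun s => |Q.eval s|) '' A) := by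
    have hcont : Continuous fun s : ℝ => |Q.eval s| := (Q.continuous_aeval).abs
    have hcomp : IsCompact ((fun s => |Q.eval s|) '' Set.Icc a b) :=
      (isCompact_Icc).image hcont
    exact hcomp.bddAbove.mono (Set.image_mono hA)
  have hle : ∀ s ∈ A, |Q.eval s| ≤ M := fun s hs => le_csSup hbdd ⟨s, hs, rfl⟩
  have hSne : S.Nonempty := Finset.card_pos.mp (by omega)
  obtain ⟨s₀, hs₀⟩ := hSne
  have hM0 : 0 ≤ M := le_trans (abs_nonneg _) (hle s₀ (hSA hs₀))
  have hinj : Set.InjOn id (↑S : Set ℝ) := fun x _ y _ h => h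
  have hdeg : Q.degree < (S.card : WithBot ℕ) := by
    refine lt_of_le_of_lt Q.degree_le_natDegree ?_
    rw [hcard]
    exact_mod_cast hQ
  have hrep := Lagrange.eq_interpolate (v := id) (f := Q) hinj hdeg
  have heval : Q.eval t = ∑ i ∈ S, Q.eval i * (Lagrange.basis S id i).eval t := by
    conv_lhs => rw [hrep]
    simp [Lagrange.interpolate_apply, Polynomial.eval_finset_sum]
  have hbasis : ∀ i ∈ S, |(Lagrange.basis S id i).eval t| ≤ (2*k/ρ)^(k-1) := by
    intro i hi
    rw [Lagrange.basis, Polynomial.eval_prod, Finset.abs_prod]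
    have hstep : ∀ j ∈ S.erase i,
        |(Lagrange.basisDivisor (id i) (id j)).eval t| ≤ 2*k/ρ := by
      intro j hj
      obtain ⟨hji, hjS⟩ := Finset.mem_erase.mp hj
      have hij : δ ≤ |i - j| := hsep i hi j hjS (Ne.symm hji)
      have hj' := hSI j hjS
      have h1 : |t - j| ≤ b - a := by
        rw [abs_sub_le_iff]
        constructor <;> [linarith [ht.1, ht.2, hj'.1, hj'.2]; linarith [ht.1, ht.2, hj'.1, hj'.2]]
      have hev : (Lagrange.basisDivisor (id i) (id j)).eval t = (i - j)⁻¹ * (t - j) := by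
        simp [Lagrange.basisDivisor]
      rw [hev, abs_mul, abs_inv]
      have hijpos : 0 < |i - j| := lt_of_lt_of_le hδ hij
      have h2 : |i - j|⁻¹ ≤ δ⁻¹ := by
        apply inv_anti₀ hδ hij
      calc |i - j|⁻¹ * |t - j| ≤ δ⁻¹ * (b - a) := by
            apply mul_le_mul h2 h1 (abs_nonneg _) (by positivity)
        _ = 2*k/ρ := by rw [hδdef]; field_simp
    calc ∏ j ∈ S.erase i, |(Lagrange.basisDivisor (id i) (id j)).eval t|
        ≤ ∏ _j ∈ S.erase i, (2*k/ρ) :=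
          Finset.prod_le_prod (fun j _ => abs_nonneg _) hstep
      _ = (2*k/ρ)^(k-1) := by
          rw [Finset.prod_const, Finset.card_erase_of_mem hi, hcard]
  calc |Q.eval t| ≤ ∑ i ∈ S, |Q.eval i * (Lagrange.basis S id i).eval t| := by
        rw [heval]; exact Finset.abs_sum_le_sum_abs _ _
    _ ≤ ∑ _i ∈ S, (2*k/ρ)^(k-1) * M := by
        refine Finset.sum_le_sum fun i hi => ?_
        rw [abs_mul, mul_comm ((2*k/ρ)^(k-1)) M]
        exact mul_le_mul (hle i (hSA hi)) (hbasis i hi) (abs_nonneg _) hM0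
    _ = ↑k * (2*↑k/ρ)^(k-1) * M := by
        rw [Finset.sum_const, hcard, nsmul_eq_mul]; ring
end

section
/- Let 0 < ρ < 1, let I be a compact interval, and let A ⊆ I be measurable with |A| ≥ ρ|I|. Then there is a constant c depending only on ρ and k such that for every polynomial Q of degree at most k−1, ∫_I |Q(t)| dt ≤ c · ∫_A |Q(t)| dt. -/
open MeasureTheory Set Polynomial

lemma norm_msprod (s : Multiset ℂ) : ‖s.prod‖ = (s.map fun z => ‖z‖).prod := by
  induction s using Multiset.induction_on with
  | empty => simp
  | cons a s ih => simp [norm_mul, ih]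

lemma prod_comp (C : ℝ) (hC : 1 ≤ C) (f g : ℂ → ℝ) (R : Multiset ℂ)
    (h : ∀ z ∈ R, 0 ≤ f z ∧ f z ≤ C * g z) :
    (R.map f).prod ≤ C ^ Multiset.card R * (R.map g).prod ∧ 0 ≤ (R.map g).prod := by
  induction R using Multiset.induction_on with
  | empty => simp
  | cons a s ih =>
    obtain ⟨ih1, ih2⟩ := ih (fun z hz => h z (Multiset.mem_cons_of_mem hz))
    obtain ⟨hfa, hfaC⟩ := h a (Multiset.mem_cons_self a s)
    have hC0 : (0:ℝ) < C := lt_of_lt_of_le one_pos hC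
    have hga : 0 ≤ g a := nonneg_of_mul_nonneg_right (hfa.trans hfaC) hC0
    constructor
    · simp only [Multiset.map_cons, Multiset.prod_cons, Multiset.card_cons, pow_succ]
      have hfs : 0 ≤ (Multiset.map f s).prod :=
        Multiset.prod_nonneg (by simpa using fun z hz => (h z (Multiset.mem_cons_of_mem hz)).1)
      calc f a * (Multiset.map f s).prod ≤ (C * g a) * (C ^ Multiset.card s * (Multiset.map g s).prod) :=
            mul_le_mul hfaC ih1 hfs (by positivity)
        _ = C ^ Multiset.card s * C * (g a * (Multiset.map g s).prod) := by ring
    · simp only [Multiset.map_cons, Multiset.prod_cons]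
      exact mul_nonneg hga ih2

lemma polyFactorization (Q : Polynomial ℝ) (t : ℝ) :
    |Q.eval t| = ‖(Q.map (algebraMap ℝ ℂ)).leadingCoeff‖ *
      (((Q.map (algebraMap ℝ ℂ)).roots.map fun z => ‖(t:ℂ) - z‖).prod) := by
  have hsplit : (Q.map (algebraMap ℝ ℂ)).Splits :=
    IsAlgClosed.splits _
  have hfact := hsplit.eq_prod_roots
  have h2 : (Q.map (algebraMap ℝ ℂ)).eval (t:ℂ) = algebraMap ℝ ℂ (Q.eval t) := by
    rw [Polynomial.eval_map]
    exact Polynomial.eval₂_at_apply (algebraMap ℝ ℂ) t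
  have h3 : ‖(Q.map (algebraMap ℝ ℂ)).eval (t:ℂ)‖ = |Q.eval t| := by rw [h2]; simp
  rw [← h3]
  conv_lhs => rw [hfact]
  rw [Polynomial.eval_mul, Polynomial.eval_C, norm_mul, Polynomial.eval_multiset_prod,
    Multiset.map_map, norm_msprod, Multiset.map_map]
  congr 2
  ext z
  simp

/-- Remez-type inequality, integral form: if `A ⊆ I` has measure at least `ρ|I|`, then for
every polynomial `Q` of degree at most `k-1`, `∫_I |Q| ≤ c(ρ,k) · ∫_A |Q|`. -/
theorem polynomial_integral_bound (ρ : ℝ) (hρ0 : 0 < ρ) (hρ1 : ρ < 1) (k : ℕ) (hk : 1 ≤ k) :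
    ∃ c : ℝ, 0 < c ∧
      ∀ (a b : ℝ), a < b → ∀ A : Set ℝ, A ⊆ Set.Icc a b → MeasurableSet A →
        ρ * (volume (Set.Icc a b)).toReal ≤ (volume A).toReal →
        ∀ Q : Polynomial ℝ, Q.natDegree < k →
          (∫ t in Set.Icc a b, |Q.eval t|) ≤ c * ∫ t in A, |Q.eval t| := by
  have hk0 : (0:ℝ) < k := by exact_mod_cast Nat.pos_of_ne_zero (by omega)
  set C0 : ℝ := 1 + 4 * k / ρ with hC0def
  have hC01 : 1 ≤ C0 := by
    have h : 0 ≤ 4 * (k:ℝ) / ρ := by positivity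
    rw [hC0def]; linarith
  have hC0pos : 0 < C0 := lt_of_lt_of_le one_pos hC01
  refine ⟨2 * C0 ^ k / ρ, by positivity, ?_⟩
  intro a b hab A hAI hAm hAρ Q hQdeg
  set L := b - a with hLdef
  have hLpos : 0 < L := sub_pos.mpr hab
  have hIvol : (volume (Icc a b)).toReal = L := by
    rw [Real.volume_Icc, ENNReal.toReal_ofReal hLpos.le]
  set δ := ρ * L / (4 * k) with hδdef
  have hδpos : 0 < δ := by positivity
  set R := (Q.map (algebraMap ℝ ℂ)).roots with hRdef
  -- cardinality of roots
  have hcardNat : Multiset.card R ≤ k := by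
    have h1 := (splits_iff_card_roots).mp (IsAlgClosed.splits (Q.map (algebraMap ℝ ℂ)))
    have h2 : (Q.map (algebraMap ℝ ℂ)).natDegree = Q.natDegree :=
      Q.natDegree_map_eq_of_injective (algebraMap ℝ ℂ).injective
    rw [← hRdef] at h1
    omega
  -- the bad set
  set B := ⋃ z ∈ R.toFinset, Icc (z.re - δ) (z.re + δ) with hBdef
  have hBmeas : MeasurableSet B :=
    R.toFinset.measurableSet_biUnion (fun z _ => measurableSet_Icc)
  set A' := A \ B with hA'def
  have hA'meas : MeasurableSet A' := hAm.diff hBmeas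
  have hA'sub : A' ⊆ A := diff_subset
  have hA'I : A' ⊆ Icc a b := hA'sub.trans hAI
  -- measure of the bad set
  have hBvol : volume B ≤ ENNReal.ofReal ((k:ℝ) * (2 * δ)) := by
    calc volume B ≤ ∑ z ∈ R.toFinset, volume (Icc (z.re - δ) (z.re + δ)) :=
          measure_biUnion_finset_le _ _
      _ = ∑ z ∈ R.toFinset, ENNReal.ofReal (2 * δ) := by
          refine Finset.sum_congr rfl (fun z _ => ?_)
          rw [Real.volume_Icc]
          ring_nf
      _ = (R.toFinset.card : ENNReal) * ENNReal.ofReal (2 * δ) := by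
          rw [Finset.sum_const, nsmul_eq_mul]
      _ ≤ (k : ENNReal) * ENNReal.ofReal (2 * δ) := by
          have : R.toFinset.card ≤ k := le_trans (R.toFinset_card_le) hcardNat
          exact mul_le_mul_left (by exact_mod_cast this) _
      _ = ENNReal.ofReal ((k:ℝ) * (2 * δ)) := by
          rw [ENNReal.ofReal_mul (by positivity : (0:ℝ) ≤ (k:ℝ))]
          congr 1
          exact (ENNReal.ofReal_natCast k).symm
  have hBfin : volume B ≠ ⊤ := (hBvol.trans_lt ENNReal.ofReal_lt_top).ne
  have hA'fin : volume A' ≠ ⊤ :=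
    ((measure_mono hA'I).trans_lt measure_Icc_lt_top).ne
  have hBvolR : (volume B).toReal ≤ (k:ℝ) * (2 * δ) :=
    ENNReal.toReal_le_of_le_ofReal (by positivity) hBvol
  -- measure lower bound for A'
  have hA'vol : ρ * L / 2 ≤ (volume A').toReal := by
    have hsub : A ⊆ A' ∪ B := fun x hx => by
      by_cases hxB : x ∈ B
      · exact Or.inr hxB
      · exact Or.inl ⟨hx, hxB⟩
    have h1 : volume A ≤ volume A' + volume B :=
      (measure_mono hsub).trans (measure_union_le _ _)
    have h2 : (volume A).toReal ≤ (volume A').toReal + (volume B).toReal := by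
      have := ENNReal.toReal_mono (by finiteness) h1
      rwa [ENNReal.toReal_add hA'fin hBfin] at this
    have hδval : (k:ℝ) * (2 * δ) = ρ * L / 2 := by
      rw [hδdef]; field_simp; ring
    rw [hIvol] at hAρ
    nlinarith [h2, hBvolR, hδval, hAρ]
  -- pointwise comparison
  have hpt : ∀ t ∈ Icc a b, ∀ t0 ∈ A', |Q.eval t| ≤ C0 ^ k * |Q.eval t0| := by
    intro t ht t0 ht0
    have ht0I : t0 ∈ Icc a b := hA'I ht0
    have hdist : |t - t0| ≤ L := by
      rw [abs_sub_le_iff]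
      constructor <;> [skip; skip] <;>
        · obtain ⟨h1, h2⟩ := ht; obtain ⟨h3, h4⟩ := ht0I; simp only [hLdef]; linarith
    have hkey : ∀ z ∈ R, 0 ≤ ‖(t:ℂ) - z‖ ∧ ‖(t:ℂ) - z‖ ≤ C0 * ‖(t0:ℂ) - z‖ := by
      intro z hz
      refine ⟨norm_nonneg _, ?_⟩
      have hzB : t0 ∉ Icc (z.re - δ) (z.re + δ) := by
        intro hmem
        exact ht0.2 (Set.mem_biUnion (Multiset.mem_toFinset.mpr hz) hmem)
      have hgδ : δ ≤ ‖(t0:ℂ) - z‖ := by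
        have h1 : |((t0:ℂ) - z).re| ≤ ‖(t0:ℂ) - z‖ := by
          exact Complex.abs_re_le_norm _
        have h2 : ((t0:ℂ) - z).re = t0 - z.re := by simp
        rw [h2] at h1
        simp only [Set.mem_Icc, not_and_or, not_le] at hzB
        rcases hzB with h | h
        · calc δ ≤ |t0 - z.re| := by rw [abs_sub_comm]; rw [le_abs]; left; linarith
            _ ≤ _ := h1
        · calc δ ≤ |t0 - z.re| := by rw [le_abs]; left; linarith
            _ ≤ _ := h1
      have htri : ‖(t:ℂ) - z‖ ≤ L + ‖(t0:ℂ) - z‖ := by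
        calc ‖(t:ℂ) - z‖ = ‖((t:ℂ) - t0) + ((t0:ℂ) - z)‖ := by ring_nf
          _ ≤ ‖(t:ℂ) - (t0:ℂ)‖ + ‖(t0:ℂ) - z‖ := norm_add_le _ _
          _ ≤ L + ‖(t0:ℂ) - z‖ := by
              have : ‖(t:ℂ) - (t0:ℂ)‖ = |t - t0| := by
                rw [← Complex.ofReal_sub, Complex.norm_real, Real.norm_eq_abs]
              rw [this]; linarith
      have hLδ : L ≤ (L / δ) * ‖(t0:ℂ) - z‖ := by
        have : (L / δ) * δ ≤ (L / δ) * ‖(t0:ℂ) - z‖ :=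
          mul_le_mul_of_nonneg_left hgδ (by positivity)
        rw [div_mul_cancel₀ _ hδpos.ne'] at this
        exact this
      have hLδval : L / δ = 4 * k / ρ := by
        rw [hδdef]; field_simp
      calc ‖(t:ℂ) - z‖ ≤ L + ‖(t0:ℂ) - z‖ := htri
        _ ≤ (L / δ) * ‖(t0:ℂ) - z‖ + ‖(t0:ℂ) - z‖ := by linarith
        _ = (1 + L / δ) * ‖(t0:ℂ) - z‖ := by ring
        _ = C0 * ‖(t0:ℂ) - z‖ := by rw [hLδval, hC0def]
    obtain ⟨hprod, hprodnn⟩ := prod_comp C0 hC01 _ _ R hkey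
    rw [polyFactorization Q t, polyFactorization Q t0, ← hRdef]
    calc ‖(Q.map (algebraMap ℝ ℂ)).leadingCoeff‖ * (R.map fun z => ‖(t:ℂ) - z‖).prod
        ≤ ‖(Q.map (algebraMap ℝ ℂ)).leadingCoeff‖ *
            (C0 ^ Multiset.card R * (R.map fun z => ‖(t0:ℂ) - z‖).prod) :=
          mul_le_mul_of_nonneg_left hprod (norm_nonneg _)
      _ ≤ ‖(Q.map (algebraMap ℝ ℂ)).leadingCoeff‖ *
            (C0 ^ k * (R.map fun z => ‖(t0:ℂ) - z‖).prod) := by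
          refine mul_le_mul_of_nonneg_left ?_ (norm_nonneg _)
          exact mul_le_mul_of_nonneg_right (pow_le_pow_right₀ hC01 hcardNat) hprodnn
      _ = C0 ^ k * (‖(Q.map (algebraMap ℝ ℂ)).leadingCoeff‖ *
            (R.map fun z => ‖(t0:ℂ) - z‖).prod) := by ring
  -- integrability
  have hcont : Continuous fun t => |Q.eval t| := (Polynomial.continuous Q).abs
  have hint : IntegrableOn (fun t => |Q.eval t|) (Icc a b) := hcont.integrableOn_Icc
  have hintA : IntegrableOn (fun t => |Q.eval t|) A := hint.mono_set hAI
  have hintA' : IntegrableOn (fun t => |Q.eval t|) A' := hint.mono_set hA'I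
  set J := ∫ t in Icc a b, |Q.eval t| with hJdef
  have hJ0 : 0 ≤ J := setIntegral_nonneg measurableSet_Icc (fun t _ => abs_nonneg _)
  set S := ∫ t in A, |Q.eval t| with hSdef
  have hS0 : 0 ≤ S := setIntegral_nonneg hAm (fun t _ => abs_nonneg _)
  -- step A: J ≤ L * C0^k * |Q(t0)| for t0 ∈ A'
  have hJbd : ∀ t0 ∈ A', J ≤ (L * C0 ^ k) * |Q.eval t0| := by
    intro t0 ht0
    calc J ≤ ∫ _ in Icc a b, C0 ^ k * |Q.eval t0| := by
          refine setIntegral_mono_on hint ?_ measurableSet_Icc (fun t ht => hpt t ht t0 ht0)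
          exact integrableOn_const measure_Icc_lt_top.ne
      _ = (L * C0 ^ k) * |Q.eval t0| := by
          rw [setIntegral_const, smul_eq_mul, measureReal_def, hIvol]; ring
  -- step B: integrate over A'
  have hstep : (volume A').toReal * J ≤ (L * C0 ^ k) * ∫ t in A', |Q.eval t| := by
    have h1 : (∫ _ in A', J) ≤ ∫ t0 in A', (L * C0 ^ k) * |Q.eval t0| := by
      refine setIntegral_mono_on ?_ (hintA'.const_mul _) hA'meas hJbd
      exact integrableOn_const hA'fin
    rwa [setIntegral_const, smul_eq_mul, integral_const_mul] at h1
  have hmono : (∫ t in A', |Q.eval t|) ≤ S := by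
    refine setIntegral_mono_set hintA ?_ (HasSubset.Subset.eventuallyLE hA'sub)
    exact Filter.Eventually.of_forall (fun t => abs_nonneg _)
  have hfinal : (ρ * L / 2) * J ≤ (L * C0 ^ k) * S := by
    calc (ρ * L / 2) * J ≤ (volume A').toReal * J := mul_le_mul_of_nonneg_right hA'vol hJ0
      _ ≤ (L * C0 ^ k) * ∫ t in A', |Q.eval t| := hstep
      _ ≤ (L * C0 ^ k) * S := mul_le_mul_of_nonneg_left hmono (by positivity)
  have heq : (ρ * L / 2) * ((2 * C0 ^ k / ρ) * S) = (L * C0 ^ k) * S := by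
    field_simp
  have := hfinal.trans_eq heq.symm
  exact le_of_mul_le_mul_left this (by positivity : (0:ℝ) < ρ * L / 2)
end

section
/- Let (t_n) be a k-admissible knot sequence with associated characteristic intervals J_n (one knot interval per newly inserted point). For any two knots x < y occurring in the sequence, the number of indices n such that J_n ⊆ [x, y] and |J_n| ≥ |[x,y]|/2 is bounded by a constant F_k depending only on k. -/
open MeasureTheory Set Filter

attribute [local instance] Classical.propDecidable

section Helpers

/-- In a sorted list, elements of `take m` are `≤` the `(m-1)`-th element. -/
lemma mem_take_le_sorted (l : List ℝ) (hl : l.Pairwise (· ≤ ·)) (m : ℕ) (hm : m ≤ l.length)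
    (hm0 : m ≠ 0) : ∀ x ∈ l.take m, x ≤ l.getD (m-1) 0 := by
  intro x hx
  rw [List.mem_iff_get] at hx
  obtain ⟨i, hi⟩ := hx
  have hlen : (l.take m).length = m := by simp [List.length_take]; omega
  have hi' : (i : ℕ) < m := by have := i.2; omega
  have hmlt : m - 1 < l.length := by omega
  rw [List.getD_eq_getElem l 0 hmlt]
  have : (l.take m).get i = l.get ⟨i, by omega⟩ := by
    simp
  rw [← hi, this]
  have := hl.rel_get_of_le (a := ⟨i, by omega⟩) (b := ⟨m-1, hmlt⟩) (by simp; omega)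
  simpa using this

lemma mem_drop_ge_sorted (l : List ℝ) (hl : l.Pairwise (· ≤ ·)) (m : ℕ) (hm : m < l.length) :
    ∀ x ∈ l.drop m, l.getD m 0 ≤ x := by
  intro x hx
  rw [List.mem_iff_get] at hx
  obtain ⟨i, hi⟩ := hx
  have hlen : (l.drop m).length = l.length - m := by simp
  have : (l.drop m).get i = l.get ⟨m + i, by have := i.2; omega⟩ := by
    simp
  rw [← hi, this, List.getD_eq_getElem l 0 hm]
  have := hl.rel_get_of_le (a := ⟨m, hm⟩) (b := ⟨m + i, by have := i.2; omega⟩) (by simp)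
  simpa using this


lemma countP_between (l : List ℝ) (P : ℝ → Bool) (m₁ m₂ : ℕ) (h12 : m₁ ≤ m₂)
    (h2 : m₂ ≤ l.length)
    (htake : ∀ x ∈ l.take m₁, P x = false)
    (hdrop : ∀ x ∈ l.drop m₂, P x = false) :
    l.countP P ≤ m₂ - m₁ := by
  conv_lhs => rw [← List.take_append_drop m₂ l]
  rw [List.countP_append]
  have hd : (l.drop m₂).countP P = 0 := List.countP_eq_zero.mpr (by
    intro a ha; simp [hdrop a ha])
  rw [hd, add_zero]
  conv_lhs => rw [← List.take_append_drop m₁ (l.take m₂)]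
  rw [List.countP_append, List.take_take, min_eq_left h12]
  have ht : (l.take m₁).countP P = 0 := List.countP_eq_zero.mpr (by
    intro a ha; simp [htake a ha])
  rw [ht, zero_add]
  calc ((l.take m₂).drop m₁).countP P ≤ ((l.take m₂).drop m₁).length :=
        List.countP_le_length
    _ = m₂ - m₁ := by simp [List.length_take]; omega

lemma sorted_get_of_counts (l : List ℝ) (hl : l.Pairwise (· ≤ ·)) (v : ℝ)
    (h : l.countP (fun x => decide (x < v)) < l.countP (fun x => decide (x ≤ v))) :
    l.getD (l.countP (fun x => decide (x ≤ v)) - 1) 0 = v := by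
  set cle := l.countP (fun x => decide (x ≤ v)) with hcle
  set clt := l.countP (fun x => decide (x < v)) with hclt
  have hle : cle ≤ l.length := List.countP_le_length
  have h1 : 1 ≤ cle := by omega
  have hm : cle - 1 < l.length := by omega
  rw [List.getD_eq_getElem l 0 hm]
  by_contra hne
  rcases lt_or_gt_of_ne hne with hlt | hgt
  · -- l[cle-1] < v : then take cle all < v, so clt ≥ cle
    have : (l.take cle).countP (fun x => decide (x < v)) = (l.take cle).length :=
      List.countP_eq_length.mpr (by
        intro a ha
        have := mem_take_le_sorted l hl cle hle (by omega) a ha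
        rw [List.getD_eq_getElem l 0 hm] at this
        simp only [decide_eq_true_eq]
        exact lt_of_le_of_lt this hlt)
    have hlen : (l.take cle).length = cle := by simp [List.length_take]; omega
    have : clt ≥ cle := by
      conv_lhs => rw [hclt, ← List.take_append_drop cle l]
      rw [List.countP_append]
      omega
    omega
  · -- v < l[cle-1] : then drop (cle-1) all > v, cle ≤ cle - 1
    have hz : (l.drop (cle-1)).countP (fun x => decide (x ≤ v)) = 0 :=
      List.countP_eq_zero.mpr (by
        intro a ha
        have := mem_drop_ge_sorted l hl (cle-1) hm a ha
        rw [List.getD_eq_getElem l 0 hm] at this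
        simp only [decide_eq_true_eq, not_le]
        exact lt_of_lt_of_le hgt this)
    have : cle ≤ cle - 1 := by
      conv_lhs => rw [hcle, ← List.take_append_drop (cle-1) l]
      rw [List.countP_append, hz, add_zero]
      calc (l.take (cle-1)).countP (fun x => decide (x ≤ v)) ≤ (l.take (cle-1)).length :=
            List.countP_le_length
        _ ≤ cle - 1 := by simp [List.length_take]
    omega

lemma countP_le_split (l : List ℝ) (v : ℝ) :
    l.countP (fun x => decide (x ≤ v)) =
      l.countP (fun x => decide (x < v)) + l.countP (fun x => decide (x = v)) := by
  induction l with
  | nil => simp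
  | cons a l ih =>
    simp only [List.countP_cons, ih]
    rcases lt_trichotomy a v with h | h | h
    · simp [h, le_of_lt h, ne_of_lt h]; omega
    · simp [h]; omega
    · simp [not_le_of_gt h, not_lt_of_gt h, (ne_of_gt h)]


lemma countP_range_eq_card (g : ℕ → Bool) (m : ℕ) :
    (List.range m).countP g = ((Finset.range m).filter (fun j => g j = true)).card := by
  induction m with
  | zero => simp
  | succ m ih =>
    rw [List.range_succ, List.countP_append, Finset.range_add_one, Finset.filter_insert]
    by_cases h : g m = true
    · rw [if_pos h, Finset.card_insert_of_notMem (by simp)]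
      simp [h, ih]
    · rw [if_neg h]
      simp [h, ih]

lemma countP_replicate' (a : ℝ) (m : ℕ) (P : ℝ → Bool) :
    (List.replicate m a).countP P = if P a then m else 0 := by
  induction m with
  | zero => simp
  | succ m ih =>
    rw [List.replicate_succ, List.countP_cons]
    by_cases h : P a <;> simp [h, ih]

lemma ncard_shift (n : ℕ) (p : ℕ → Prop) :
    {j | 2 ≤ j ∧ j ≤ n ∧ p j}.ncard
      = ((Finset.range (n-1)).filter (fun j => p (j+2))).card := by
  have hset : {j | 2 ≤ j ∧ j ≤ n ∧ p j}
      = (fun i => i + 2) '' ↑((Finset.range (n-1)).filter (fun j => p (j+2))) := by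
    ext j
    simp only [Set.mem_image, Finset.coe_filter, Finset.mem_range, Set.mem_setOf_eq]
    constructor
    · rintro ⟨h2, hn', hp⟩
      exact ⟨j - 2, ⟨by omega, by rw [show j - 2 + 2 = j by omega]; exact hp⟩, by omega⟩
    · rintro ⟨i, ⟨hi, hp⟩, rfl⟩
      exact ⟨by omega, by omega, hp⟩
  rw [hset, Set.ncard_image_of_injective _ (fun a b h => by omega), Set.ncard_coe_finset]

end Helpers

noncomputable section

/-- A `k`-admissible knot sequence on `[0,1]`: `t 0 = 0`, `t 1 = 1`, the points
`t n` for `n ≥ 2` are dense in the open unit interval and every value is attained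
at most `k` times. -/
structure KnotSeq (k : ℕ) where
  t : ℕ → ℝ
  two_le : 2 ≤ k
  t0 : t 0 = 0
  t1 : t 1 = 1
  mem_Ioo : ∀ n, 2 ≤ n → t n ∈ Set.Ioo (0:ℝ) 1
  dense' : ∀ x ∈ Set.Icc (0:ℝ) 1, ∀ ε : ℝ, 0 < ε → ∃ n, 2 ≤ n ∧ |t n - x| < ε
  mult_finite : ∀ x : ℝ, ({n | 2 ≤ n ∧ t n = x} : Set ℕ).Finite
  mult_le : ∀ x : ℝ, ({n | 2 ≤ n ∧ t n = x} : Set ℕ).ncard ≤ k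

variable {k : ℕ}

/-- The sorted list of knots of the partition `𝒯_n`: the points `t 2, …, t n`
together with `0` and `1`, each with multiplicity `k`. -/
noncomputable def KnotSeq.plist (K : KnotSeq k) (n : ℕ) : List ℝ :=
  (List.replicate k (0:ℝ) ++ List.replicate k (1:ℝ) ++
    ((List.range (n-1)).map (fun j => K.t (j+2)))).mergeSort (fun a b => decide (a ≤ b))

/-- `K.τ n i` is the `i`-th knot `τ_{n,i}` of the partition `𝒯_n` (1-indexed,
`1 ≤ i ≤ n + 2k - 1`). -/
noncomputable def KnotSeq.τ (K : KnotSeq k) (n i : ℕ) : ℝ := (K.plist n).getD (i-1) 0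

/-- The length `|D_{n,i}^{(ℓ)}| = τ_{n,i+ℓ} - τ_{n,i}`. -/
noncomputable def KnotSeq.len (K : KnotSeq k) (n i ℓ : ℕ) : ℝ := K.τ n (i+ℓ) - K.τ n i

/-- `ℓ`-regularity with parameter `γ`: neighbouring spans of `ℓ+1` consecutive
knots have comparable lengths. -/
def KnotSeq.Regular (K : KnotSeq k) (ℓ : ℕ) (γ : ℝ) : Prop :=
  ∀ n, 2 ≤ n → ∀ i, k - ℓ + 1 ≤ i → i ≤ n + k - 2 →
    K.len n i ℓ / γ ≤ K.len n (i+1) ℓ ∧ K.len n (i+1) ℓ ≤ γ * K.len n i ℓ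

/-- Truncated power function `x ↦ (x-a)_+^d`. -/
def truncPow (a : ℝ) (d : ℕ) : ℝ → ℝ := fun x => (max (x - a) 0) ^ d

/-- Multiplicity of the knot `t j` among `t 2, …, t j`. -/
noncomputable def KnotSeq.multUpTo (K : KnotSeq k) (j : ℕ) : ℕ :=
  ({i | 2 ≤ i ∧ i ≤ j ∧ K.t i = K.t j} : Set ℕ).ncard

/-- The space `𝒮_n^{(k)}` of splines of order `k` with knots `𝒯_n`, realized as the
span of polynomials of degree `< k` and appropriate truncated powers. -/
noncomputable def KnotSeq.splineSpace (K : KnotSeq k) (n : ℕ) : Submodule ℝ (ℝ → ℝ) :=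
  Submodule.span ℝ
    ({f | ∃ d, d < k ∧ f = fun x : ℝ => x ^ d} ∪
     {f | ∃ j, 2 ≤ j ∧ j ≤ n ∧ f = truncPow (K.t j) (k - K.multUpTo j)})

/-- The increasing ladder of spaces, reindexed over `ℕ`: index `m` corresponds to the
paper's index `n = m - k + 2`; for `m < k` we get polynomials of degree `≤ m`. -/
noncomputable def KnotSeq.sys (K : KnotSeq k) (m : ℕ) : Submodule ℝ (ℝ → ℝ) :=
  if m < k then Submodule.span ℝ {f | ∃ d, d ≤ m ∧ f = fun x : ℝ => x ^ d}
  else K.splineSpace (m - k + 2)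

/-- `f` is the orthonormal spline system of order `k` associated with `K`
(reindexed so that the paper's `f_n` is `f (n + k - 2)`). -/
def KnotSeq.IsOSS (K : KnotSeq k) (f : ℕ → ℝ → ℝ) : Prop :=
  ∀ m, f m ∈ K.sys m ∧ (∫ x in (0:ℝ)..1, (f m x)^2) = 1 ∧
    ∀ m', m' < m → ∀ g ∈ K.sys m', (∫ x in (0:ℝ)..1, f m x * g x) = 0

/-- The (last) position `i₀` of the newly inserted knot `t n` inside `𝒯_n`. -/
noncomputable def KnotSeq.i0 (K : KnotSeq k) (n : ℕ) : ℕ :=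
  k + ({j | 2 ≤ j ∧ j ≤ n ∧ K.t j < K.t n} : Set ℕ).ncard
    + ({j | 2 ≤ j ∧ j ≤ n ∧ K.t j = K.t n} : Set ℕ).ncard

/-- `|α_j|`, the absolute value of the coefficient from formula (3.2) of the paper. -/
noncomputable def KnotSeq.absα (K : KnotSeq k) (n j : ℕ) : ℝ :=
  (∏ l ∈ Finset.Ico (K.i0 n - k + 1) j,
      (K.τ n (K.i0 n) - K.τ n l) / (K.τ n (l+k) - K.τ n l)) *
  (∏ l ∈ Finset.Ico (j+1) (K.i0 n),
      (K.τ n (l+k) - K.τ n (K.i0 n)) / (K.τ n (l+k) - K.τ n l))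

/-- `Λ⁰`: indices whose B-spline support is approximately minimal. -/
noncomputable def KnotSeq.Λ0 (K : KnotSeq k) (n : ℕ) : Finset ℕ :=
  (Finset.Icc (K.i0 n - k) (K.i0 n)).filter (fun j =>
    ∀ l ∈ Finset.Icc (K.i0 n - k) (K.i0 n), K.len n j k ≤ 2 * K.len n l k)

/-- `Λ¹`: indices of `Λ⁰` with maximal `|α_j|`. -/
noncomputable def KnotSeq.Λ1 (K : KnotSeq k) (n : ℕ) : Finset ℕ :=
  (K.Λ0 n).filter (fun j => ∀ l ∈ K.Λ0 n, K.absα n l ≤ K.absα n j)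

/-- `J` is a characteristic interval for the pair `(𝒯_n, 𝒯_{n-1})`: a knot interval
of maximal length inside the support `[τ_{j⁰}, τ_{j⁰+k}]` for some `j⁰ ∈ Λ¹`. -/
def KnotSeq.IsCharInterval (K : KnotSeq k) (n : ℕ) (J : Set ℝ) : Prop :=
  ∃ j0 ∈ K.Λ1 n, ∃ l, l < k ∧
    J = Set.Icc (K.τ n (j0+l)) (K.τ n (j0+l+1)) ∧
    ∀ l' < k, K.len n (j0+l') 1 ≤ K.len n (j0+l) 1

/-- `d_n`-type count: the number of knots of `𝒯_n` (with multiplicity) lying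
between the sets `A` and `B` (including endpoints of both). -/
noncomputable def KnotSeq.dcount (K : KnotSeq k) (n : ℕ) (A B : Set ℝ) : ℕ :=
  ((Finset.Icc 1 (n+2*k-1)).filter (fun i =>
    K.τ n i ∈ Set.Icc (min (sSup A) (sSup B)) (max (sInf A) (sInf B)))).card

/-- Distance between two (closed bounded) intervals. -/
noncomputable def setDist (A B : Set ℝ) : ℝ := max (max (sInf B - sSup A) (sInf A - sSup B)) 0

/-- Cox–de Boor B-splines of order `m` (degree `m-1`) on the knots `τ`. -/
noncomputable def Bspline (τ : ℕ → ℝ) : ℕ → ℕ → ℝ → ℝ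
  | _, 0, _ => 0
  | i, 1, x => if τ i ≤ x ∧ x < τ (i+1) then (1:ℝ) else 0
  | i, (m+2), x =>
      (if τ (i+m+1) = τ i then 0 else (x - τ i) / (τ (i+m+1) - τ i)) * Bspline τ i (m+1) x
    + (if τ (i+m+2) = τ (i+1) then 0 else (τ (i+m+2) - x) / (τ (i+m+2) - τ (i+1))) *
        Bspline τ (i+1) (m+1) x

/-- An `H¹[0,1]`-atom. -/
def IsAtom1 (a : ℝ → ℝ) : Prop :=
  Measurable a ∧
  ((∀ x ∈ Set.Icc (0:ℝ) 1, a x = 1) ∨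
   ∃ α β : ℝ, 0 ≤ α ∧ α < β ∧ β ≤ 1 ∧
     (∀ x, x ∉ Set.Icc α β → a x = 0) ∧
     (∀ x, |a x| ≤ (β - α)⁻¹) ∧
     (∫ x in α..β, a x) = 0)

/-- `c, a` is an atomic representation of `f` in `H¹[0,1]` (convergence in `L¹`). -/
def H1Rep (f : ℝ → ℝ) (c : ℕ → ℝ) (a : ℕ → ℝ → ℝ) : Prop :=
  (∀ n, IsAtom1 (a n)) ∧ Summable (fun n => |c n|) ∧
  Filter.Tendsto
    (fun N => ∫ x in Set.Icc (0:ℝ) 1, |f x - ∑ n ∈ Finset.range N, c n * a n x|)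
    Filter.atTop (nhds 0)

/-- Membership in the atomic Hardy space `H¹[0,1]`. -/
def MemH1 (f : ℝ → ℝ) : Prop := ∃ c a, H1Rep f c a

/-- The atomic `H¹[0,1]` norm. -/
noncomputable def H1norm (f : ℝ → ℝ) : ℝ :=
  sInf {s | ∃ c a, H1Rep f c a ∧ s = ∑' n, |c n|}

/-- The square function of the series `∑ aₙ fₙ`. -/
noncomputable def Pfun (a : ℕ → ℝ) (f : ℕ → ℝ → ℝ) (x : ℝ) : ℝ :=
  Real.sqrt (∑' m, (a m * f m x)^2)

/-- The maximal function of the partial sums of the series `∑ aₙ fₙ`. -/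
noncomputable def Sfun (a : ℕ → ℝ) (f : ℕ → ℝ → ℝ) (x : ℝ) : ℝ :=
  ⨆ N : ℕ, |∑ m ∈ Finset.range N, a m * f m x|

end

section KLemmas
variable {k : ℕ}

lemma KnotSeq.plist_perm (K : KnotSeq k) (n : ℕ) :
    (K.plist n).Perm (List.replicate k (0:ℝ) ++ List.replicate k (1:ℝ) ++
      ((List.range (n-1)).map (fun j => K.t (j+2)))) :=
  List.mergeSort_perm _ _

lemma KnotSeq.plist_sorted (K : KnotSeq k) (n : ℕ) : (K.plist n).Pairwise (· ≤ ·) := by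
  have := List.pairwise_mergeSort (le := fun a b : ℝ => decide (a ≤ b))
    (fun a b c hab hbc => by simp_all; linarith)
    (fun a b => by simp [le_total])
    (List.replicate k (0:ℝ) ++ List.replicate k (1:ℝ) ++
      ((List.range (n-1)).map (fun j => K.t (j+2))))
  exact this.imp (by simp)

lemma KnotSeq.plist_length (K : KnotSeq k) (n : ℕ) :
    (K.plist n).length = 2*k + (n-1) := by
  rw [(K.plist_perm n).length_eq]
  simp; ring

lemma KnotSeq.countP_plist (K : KnotSeq k) (n : ℕ) (P : ℝ → Bool) :
    (K.plist n).countP P = (if P 0 then k else 0) + (if P 1 then k else 0)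
      + (List.range (n-1)).countP (fun j => P (K.t (j+2))) := by
  rw [(K.plist_perm n).countP_eq, List.countP_append, List.countP_append,
    countP_replicate', countP_replicate', List.countP_map]
  rfl

lemma KnotSeq.i0_eq (K : KnotSeq k) (n : ℕ) :
    K.i0 n = k + (List.range (n-1)).countP (fun j => decide (K.t (j+2) < K.t n))
      + (List.range (n-1)).countP (fun j => decide (K.t (j+2) = K.t n)) := by
  rw [KnotSeq.i0, ncard_shift, ncard_shift, countP_range_eq_card
    (fun j => decide (K.t (j+2) < K.t n)), countP_range_eq_card
    (fun j => decide (K.t (j+2) = K.t n))]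
  simp only [decide_eq_true_eq]

lemma KnotSeq.ceq_pos (K : KnotSeq k) (n : ℕ) (hn : 2 ≤ n) :
    0 < (List.range (n-1)).countP (fun j => decide (K.t (j+2) = K.t n)) := by
  rw [List.countP_pos_iff]
  exact ⟨n - 2, by simp [List.mem_range]; omega, by simp [show n - 2 + 2 = n by omega]⟩

lemma KnotSeq.countP_le_plist (K : KnotSeq k) (n : ℕ) (hn : 2 ≤ n) :
    (K.plist n).countP (fun x => decide (x ≤ K.t n)) = K.i0 n := by
  have h01 : K.t n ∈ Set.Ioo (0:ℝ) 1 := K.mem_Ioo n hn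
  rw [K.countP_plist n]
  have e0 : (decide ((0:ℝ) ≤ K.t n)) = true := by simp [le_of_lt h01.1]
  have e1 : (decide ((1:ℝ) ≤ K.t n)) = false := by simp; linarith [h01.2]
  rw [e0, e1]
  have h := countP_le_split ((List.range (n-1)).map (fun j => K.t (j+2))) (K.t n)
  rw [List.countP_map, List.countP_map, List.countP_map] at h
  have e2 : ((fun x => decide (x ≤ K.t n)) ∘ fun j => K.t (j+2))
      = (fun j => decide (K.t (j+2) ≤ K.t n)) := rfl
  have e3 : ((fun x => decide (x < K.t n)) ∘ fun j => K.t (j+2))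
      = (fun j => decide (K.t (j+2) < K.t n)) := rfl
  have e4 : ((fun x => decide (x = K.t n)) ∘ fun j => K.t (j+2))
      = (fun j => decide (K.t (j+2) = K.t n)) := rfl
  rw [e2, e3, e4] at h
  rw [K.i0_eq n]
  norm_num
  omega

lemma KnotSeq.countP_lt_plist (K : KnotSeq k) (n : ℕ) (hn : 2 ≤ n) :
    (K.plist n).countP (fun x => decide (x < K.t n))
      = k + (List.range (n-1)).countP (fun j => decide (K.t (j+2) < K.t n)) := by
  have h01 : K.t n ∈ Set.Ioo (0:ℝ) 1 := K.mem_Ioo n hn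
  rw [K.countP_plist n]
  have e0 : (decide ((0:ℝ) < K.t n)) = true := by simp [h01.1]
  have e1 : (decide ((1:ℝ) < K.t n)) = false := by simp; linarith [h01.2]
  rw [e0, e1]
  norm_num

lemma KnotSeq.i0_lb (K : KnotSeq k) (n : ℕ) (hn : 2 ≤ n) : k + 1 ≤ K.i0 n := by
  have h1 := K.ceq_pos n hn
  rw [K.i0_eq n]; omega

lemma KnotSeq.clt_ceq_le (K : KnotSeq k) (n : ℕ) :
    (List.range (n-1)).countP (fun j => decide (K.t (j+2) < K.t n))
      + (List.range (n-1)).countP (fun j => decide (K.t (j+2) = K.t n)) ≤ n - 1 := by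
  have h := countP_le_split ((List.range (n-1)).map (fun j => K.t (j+2))) (K.t n)
  rw [List.countP_map, List.countP_map, List.countP_map] at h
  have e3 : ((fun x => decide (x < K.t n)) ∘ fun j => K.t (j+2))
      = (fun j => decide (K.t (j+2) < K.t n)) := rfl
  have e4 : ((fun x => decide (x = K.t n)) ∘ fun j => K.t (j+2))
      = (fun j => decide (K.t (j+2) = K.t n)) := rfl
  rw [e3, e4] at h
  have h2 : ((List.range (n-1)).countP
      ((fun x => decide (x ≤ K.t n)) ∘ fun j => K.t (j+2))) ≤ n - 1 := by
    calc _ ≤ (List.range (n-1)).length := List.countP_le_length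
      _ = n - 1 := by simp
  omega

lemma KnotSeq.i0_ub (K : KnotSeq k) (n : ℕ) (hn : 2 ≤ n) : K.i0 n ≤ k + (n-1) := by
  have h := K.clt_ceq_le n
  rw [K.i0_eq n]; omega

lemma KnotSeq.tau_i0 (K : KnotSeq k) (n : ℕ) (hn : 2 ≤ n) : K.τ n (K.i0 n) = K.t n := by
  have h1 := K.countP_le_plist n hn
  have h2 := K.countP_lt_plist n hn
  have h3 := K.ceq_pos n hn
  have h4 := K.i0_eq n
  have hlt : (K.plist n).countP (fun x => decide (x < K.t n))
      < (K.plist n).countP (fun x => decide (x ≤ K.t n)) := by omega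
  have := sorted_get_of_counts (K.plist n) (K.plist_sorted n) (K.t n) hlt
  rw [h1] at this
  exact this

lemma KnotSeq.tau_mono (K : KnotSeq k) (n : ℕ) {i j : ℕ} (hi : 1 ≤ i) (hij : i ≤ j)
    (hj : j ≤ 2*k + (n-1)) : K.τ n i ≤ K.τ n j := by
  have hlen := K.plist_length n
  have hj' : j - 1 < (K.plist n).length := by omega
  have hi' : i - 1 < (K.plist n).length := by omega
  rw [KnotSeq.τ, KnotSeq.τ, List.getD_eq_getElem _ 0 hi', List.getD_eq_getElem _ 0 hj']
  have := (K.plist_sorted n).rel_get_of_le (a := ⟨i-1, hi'⟩) (b := ⟨j-1, hj'⟩)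
    (by simp [Fin.le_def]; omega)
  simpa using this

end KLemmas
lemma key_facts {k : ℕ} (hk : 2 ≤ k) (K : KnotSeq k) (n : ℕ) (hn : 2 ≤ n) {J : Set ℝ}
    (hchar : K.IsCharInterval n J) {x y : ℝ} (hL : 0 < y - x) (hsub : J ⊆ Set.Icc x y)
    (hvol : (y - x)/2 ≤ (MeasureTheory.volume J).toReal) :
    |K.t n - (x+y)/2| ≤ k * (y - x) ∧
    K.τ n (K.i0 n - k) ≤ K.t n - (y-x)/4 ∧
    K.t n + (y-x)/4 ≤ K.τ n (K.i0 n + k) := by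
  obtain ⟨j0, hj0Λ1, l, hlk, hJeq, hmax⟩ := hchar
  have hj0Λ0 : j0 ∈ K.Λ0 n := (Finset.mem_filter.mp hj0Λ1).1
  rw [KnotSeq.Λ0, Finset.mem_filter, Finset.mem_Icc] at hj0Λ0
  obtain ⟨⟨hj0l, hj0u⟩, hmin⟩ := hj0Λ0
  set i0 := K.i0 n with hi0def
  have hi0lb : k + 1 ≤ i0 := K.i0_lb n hn
  have hi0ub : i0 ≤ k + (n-1) := K.i0_ub n hn
  set N := 2*k + (n-1) with hNdef
  have hik : i0 + k ≤ N := by omega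
  set a := K.τ n (j0+l) with hadef
  set b := K.τ n (j0+l+1) with hbdef
  set L := y - x with hLdef
  -- b - a ≥ L/2
  have hba : L/2 ≤ b - a := by
    rw [hJeq, Real.volume_Icc] at hvol
    by_cases h0 : 0 ≤ b - a
    · rwa [ENNReal.toReal_ofReal h0] at hvol
    · rw [ENNReal.ofReal_of_nonpos (le_of_not_ge h0)] at hvol
      simp at hvol; linarith
  have hab : a ≤ b := by linarith
  -- index bounds
  have hj1 : 1 ≤ j0 := by omega
  have hju : j0 + l + 1 ≤ i0 + k := by omega
  have mono : ∀ {i j : ℕ}, 1 ≤ i → i ≤ j → j ≤ N → K.τ n i ≤ K.τ n j :=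
    fun hi hij hj => K.tau_mono n hi hij hj
  have hxa : x ≤ a := (hsub (by rw [hJeq]; exact ⟨le_refl a, hab⟩)).1
  have hby : b ≤ y := (hsub (by rw [hJeq]; exact ⟨hab, le_refl b⟩)).2
  set c := (x+y)/2 with hcdef
  have hca : a ≤ c := by rw [hcdef]; linarith
  have hcb : c ≤ b := by rw [hcdef]; linarith
  -- support bound
  have hstep : ∀ m, m < k → K.τ n (j0+m+1) - K.τ n (j0+m) ≤ b - a := by
    intro m hm
    have := hmax m hm
    rw [KnotSeq.len, KnotSeq.len] at this
    exact this
  have claim : ∀ m, m ≤ k → K.τ n (j0+m) - K.τ n j0 ≤ m * (b - a) := by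
    intro m
    induction m with
    | zero => intro _; simp
    | succ m ih =>
      intro hm
      have h1 := ih (by omega)
      have h2 := hstep m (by omega)
      push_cast
      have : (j0 + (m+1)) = (j0 + m) + 1 := by omega
      rw [this]
      linarith
  have hsupp : K.τ n (j0+k) - K.τ n j0 ≤ k * (b - a) := claim k le_rfl
  have htn : K.τ n i0 = K.t n := K.tau_i0 n hn
  have h1 : K.τ n j0 ≤ K.τ n i0 := mono hj1 hj0u (by omega)
  have h2 : K.τ n i0 ≤ K.τ n (j0+k) := mono (by omega) (by omega) (by omega)
  have h3 : K.τ n j0 ≤ a := mono hj1 (by omega) (by omega)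
  have h4 : b ≤ K.τ n (j0+k) := mono (by omega) (by omega) (by omega)
  have hbaL : b - a ≤ L := by linarith
  have hkba : (k:ℝ) * (b - a) ≤ k * L :=
    mul_le_mul_of_nonneg_left hbaL (by positivity)
  constructor
  · rw [abs_le]
    constructor <;> [linarith [htn]; linarith [htn]]
  -- the L/4 gaps
  have hlenba : b - a ≤ K.len n j0 k := by rw [KnotSeq.len]; linarith
  have hminL : K.len n j0 k ≤ 2 * K.len n (i0-k) k := hmin (i0-k) (by
    rw [Finset.mem_Icc]; omega)
  have hminR : K.len n j0 k ≤ 2 * K.len n i0 k := hmin i0 (by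
    rw [Finset.mem_Icc]; omega)
  simp only [KnotSeq.len] at hminL hminR
  rw [show i0 - k + k = i0 by omega] at hminL
  constructor
  · have : L/4 ≤ K.τ n i0 - K.τ n (i0-k) := by linarith
    linarith [htn]
  · have : L/4 ≤ K.τ n (i0+k) - K.τ n i0 := by linarith
    linarith [htn]
/-- Lemma 4.5 (combinatorics of characteristic intervals): there is a constant `F_k`
depending only on `k` such that for any two knots `x < y`, the number of indices `n`
with `J_n ⊆ [x,y]` and `|J_n| ≥ |[x,y]|/2` is at most `F_k`. -/
theorem charInterval_count_bound (k : ℕ) (hk : 2 ≤ k) :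
    ∃ F : ℕ,
      ∀ (K : KnotSeq k) (J : ℕ → Set ℝ),
        (∀ n, 2 ≤ n → K.IsCharInterval n (J n)) →
        ∀ (p q : ℕ), K.t p < K.t q →
          ∀ s : Finset ℕ,
            (∀ n ∈ s, 2 ≤ n ∧ J n ⊆ Set.Icc (K.t p) (K.t q) ∧
              (K.t q - K.t p) / 2 ≤ (MeasureTheory.volume (J n)).toReal) →
            s.card ≤ F := by
  refine ⟨2*k * (8*k+1), ?_⟩
  intro K J hJ p q hpq s hs
  set x := K.t p with hx
  set y := K.t q with hy
  have hL : 0 < y - x := sub_pos.mpr hpq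
  set L := y - x with hLdef
  set c := (x+y)/2 with hc
  have key : ∀ n ∈ s, |K.t n - c| ≤ k * L ∧
      K.τ n (K.i0 n - k) ≤ K.t n - L/4 ∧ K.t n + L/4 ≤ K.τ n (K.i0 n + k) := by
    intro n hn
    obtain ⟨h2n, hsub, hvol⟩ := hs n hn
    exact key_facts hk K n h2n (hJ n h2n) hL hsub hvol
  have hL4 : 0 < L/4 := by linarith
  set g : ℕ → ℕ := fun n => ⌊(K.t n - (c - k*L)) / (L/4)⌋₊ with hg
  have hr : ∀ n ∈ s, 0 ≤ (K.t n - (c - k*L))/(L/4) ∧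
      (K.t n - (c - k*L))/(L/4) ≤ 8*k := by
    intro n hn
    have h := (key n hn).1
    rw [abs_le] at h
    constructor
    · apply div_nonneg _ (le_of_lt hL4); linarith [h.1]
    · rw [div_le_iff₀ hL4]
      push_cast
      calc K.t n - (c - (k:ℝ)*L) = (K.t n - c) + (k:ℝ)*L := by ring
        _ ≤ (k:ℝ)*L + (k:ℝ)*L := by linarith [h.2]
        _ = 8*(k:ℝ)*(L/4) := by ring
  have hmaps : ∀ n ∈ s, g n ∈ Finset.range (8*k+1) := by
    intro n hn
    rw [Finset.mem_range, hg]
    have h := hr n hn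
    rw [Nat.floor_lt h.1]
    push_cast
    linarith [h.2]
  have hfiber : ∀ b ∈ Finset.range (8*k+1),
      (s.filter (fun n => g n = b)).card ≤ 2*k := by
    intro b _
    set sb := s.filter (fun n => g n = b) with hsb
    rcases sb.eq_empty_or_nonempty with he | hne
    · rw [he]; simp
    set n' := sb.max' hne with hn'
    have hn'sb : n' ∈ sb := sb.max'_mem hne
    have hn's : n' ∈ s := Finset.mem_of_mem_filter _ hn'sb
    have h2n' : 2 ≤ n' := (hs n' hn's).1
    have hclose : ∀ m ∈ sb, |K.t m - K.t n'| < L/4 := by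
      intro m hm
      have hms : m ∈ s := Finset.mem_of_mem_filter _ hm
      have hgm : g m = b := (Finset.mem_filter.mp hm).2
      have hgn : g n' = b := (Finset.mem_filter.mp hn'sb).2
      set rm := (K.t m - (c - k*L))/(L/4) with hrm
      set rn := (K.t n' - (c - k*L))/(L/4) with hrn
      have h0m : 0 ≤ rm := (hr m hms).1
      have h0n : 0 ≤ rn := (hr n' hn's).1
      have hbm1 : (b:ℝ) ≤ rm := by rw [← hgm]; exact Nat.floor_le h0m
      have hbm2 : rm < b + 1 := by
        rw [← hgm]; push_cast; exact Nat.lt_floor_add_one rm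
      have hbn1 : (b:ℝ) ≤ rn := by rw [← hgn]; exact Nat.floor_le h0n
      have hbn2 : rn < b + 1 := by
        rw [← hgn]; push_cast; exact Nat.lt_floor_add_one rn
      have habs : |rm - rn| < 1 := abs_lt.mpr ⟨by linarith, by linarith⟩
      have ht : K.t m - K.t n' = (rm - rn) * (L/4) := by
        rw [hrm, hrn, sub_mul, div_mul_cancel₀ _ (ne_of_gt hL4),
          div_mul_cancel₀ _ (ne_of_gt hL4)]
        ring
      rw [ht, abs_mul, abs_of_pos hL4]
      calc |rm - rn| * (L/4) < 1 * (L/4) :=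
            mul_lt_mul_of_pos_right habs hL4
        _ = L/4 := one_mul _
    set A := K.τ n' (K.i0 n' - k) with hA
    set B := K.τ n' (K.i0 n' + k) with hB
    have hkey' := key n' hn's
    have hAB : ∀ m ∈ sb, A < K.t m ∧ K.t m < B := by
      intro m hm
      have h := hclose m hm
      rw [abs_lt] at h
      exact ⟨lt_of_le_of_lt hkey'.2.1 (by linarith [h.1]),
        lt_of_lt_of_le (by linarith [h.2]) hkey'.2.2⟩
    set T := (Finset.range (n'-1)).filter
      (fun j => A < K.t (j+2) ∧ K.t (j+2) < B) with hT
    have hcard1 : sb.card ≤ T.card := by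
      apply Finset.card_le_card_of_injOn (fun m => m - 2)
      · intro m hm
        have hms : m ∈ s := Finset.mem_of_mem_filter _ hm
        have h2m : 2 ≤ m := (hs m hms).1
        have hmn : m ≤ n' := Finset.le_max' sb m hm
        rw [hT, Finset.mem_coe, Finset.mem_filter, Finset.mem_range]
        have hABm := hAB m hm
        rw [show m - 2 + 2 = m by omega]
        exact ⟨by show m - 2 < n' - 1; omega, hABm⟩
      · intro m1 h1 m2 h2 h12
        have hm1 : 2 ≤ m1 := (hs m1 (Finset.mem_of_mem_filter _ h1)).1
        have hm2 : 2 ≤ m2 := (hs m2 (Finset.mem_of_mem_filter _ h2)).1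
        simp only at h12
        omega
    have hi0lb : k + 1 ≤ K.i0 n' := K.i0_lb n' h2n'
    have hi0ub : K.i0 n' ≤ k + (n'-1) := K.i0_ub n' h2n'
    have hlen : (K.plist n').length = 2*k + (n'-1) := K.plist_length n'
    set P : ℝ → Bool := fun v => decide (A < v ∧ v < B) with hP
    have e1 : T.card = (List.range (n'-1)).countP (fun j => P (K.t (j+2))) := by
      rw [countP_range_eq_card (fun j => P (K.t (j+2))) (n'-1), hT]
      congr 1
      apply Finset.filter_congr
      intro j _
      simp [hP]
    have e2 : (List.range (n'-1)).countP (fun j => P (K.t (j+2)))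
        ≤ (K.plist n').countP P := by
      rw [K.countP_plist n' P]
      omega
    have hAeq : A = (K.plist n').getD (K.i0 n' - k - 1) 0 := rfl
    have hBeq : B = (K.plist n').getD (K.i0 n' + k - 1) 0 := rfl
    have e3 : (K.plist n').countP P ≤ (K.i0 n' + k - 1) - (K.i0 n' - k) := by
      apply countP_between _ _ _ _ (by omega) (by omega)
      · intro v hv
        have hle := mem_take_le_sorted (K.plist n') (K.plist_sorted n')
          (K.i0 n' - k) (by omega) (by omega) v hv
        rw [hP]
        simp only [decide_eq_false_iff_not, not_and]
        intro hAv _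
        rw [hAeq] at hAv
        exact absurd hAv (not_lt.mpr hle)
      · intro v hv
        have hge := mem_drop_ge_sorted (K.plist n') (K.plist_sorted n')
          (K.i0 n' + k - 1) (by omega) v hv
        rw [hP]
        simp only [decide_eq_false_iff_not, not_and]
        intro _
        rw [hBeq]
        exact not_lt.mpr hge
    calc sb.card ≤ T.card := hcard1
      _ = (List.range (n'-1)).countP (fun j => P (K.t (j+2))) := e1
      _ ≤ (K.plist n').countP P := e2
      _ ≤ (K.i0 n' + k - 1) - (K.i0 n' - k) := e3
      _ ≤ 2*k := by omega
  have := Finset.card_le_mul_card_image_of_maps_to hmaps (2*k) hfiber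
  rw [Finset.card_range] at this
  exact this
end

section
/- Let (f_n) be an orthonormal system in L²[0,1] and (a_n) real coefficients such that the series Σ_n a_n f_n converges unconditionally in L¹[0,1]. Then the square function P = (Σ_n a_n² f_n²)^{1/2} belongs to L¹[0,1] and ‖P‖₁ ≤ C · sup_{ε ∈ {−1,1}^ℕ} ‖Σ_n ε_n a_n f_n‖₁ for an absolute constant C. -/
open MeasureTheory Set Filter

open Finset in

noncomputable def sgnSum (b : ℕ → ℝ) (N : ℕ) (s : Finset ℕ) : ℝ :=
  ∑ n ∈ Finset.range N, (if n ∈ s then b n else - b n)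

open Finset in
lemma powerset_sum_succ (F : Finset ℕ → ℝ) (N : ℕ) :
    ∑ s ∈ (range (N+1)).powerset, F s
      = ∑ s ∈ (range N).powerset, (F s + F (insert N s)) := by
  rw [Finset.range_add_one, Finset.powerset_insert, Finset.sum_union, Finset.sum_image,
    ← Finset.sum_add_distrib]
  · intro s hs t ht h
    have hNs : N ∉ s := fun hN => by simpa using Finset.mem_powerset.1 hs hN
    have hNt : N ∉ t := fun hN => by simpa using Finset.mem_powerset.1 ht hN
    have := congrArg (Finset.erase · N) h
    simpa [Finset.erase_insert hNs, Finset.erase_insert hNt] using this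
  · rw [Finset.disjoint_left]
    intro s hs hs'
    have hNs : N ∉ s := fun hN => by simpa using Finset.mem_powerset.1 hs hN
    rcases Finset.mem_image.1 hs' with ⟨t, ht, rfl⟩
    exact hNs (Finset.mem_insert_self _ _)

open Finset in
lemma sgnSum_succ_notmem (b : ℕ → ℝ) (N : ℕ) (s : Finset ℕ) (hs : s ⊆ range N) :
    sgnSum b (N+1) s = sgnSum b N s - b N := by
  have hN : N ∉ s := fun h => by simpa using hs h
  rw [sgnSum, Finset.sum_range_succ, if_neg hN, sgnSum]; ring

open Finset in
lemma sgnSum_succ_mem (b : ℕ → ℝ) (N : ℕ) (s : Finset ℕ) (hs : s ⊆ range N) :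
    sgnSum b (N+1) (insert N s) = sgnSum b N s + b N := by
  rw [sgnSum, Finset.sum_range_succ, if_pos (Finset.mem_insert_self _ _), sgnSum]
  congr 1
  apply Finset.sum_congr rfl
  intro n hn
  have : n ≠ N := by simp at hn; omega
  simp [Finset.mem_insert, this]

open Finset in
lemma sum_sq_powerset (b : ℕ → ℝ) (N : ℕ) :
    ∑ s ∈ (range N).powerset, (sgnSum b N s)^2
      = 2^N * ∑ n ∈ range N, (b n)^2 := by
  induction N with
  | zero => simp [sgnSum]
  | succ N ih =>
    rw [powerset_sum_succ]
    have : ∀ s ∈ (range N).powerset,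
        (sgnSum b (N+1) s)^2 + (sgnSum b (N+1) (insert N s))^2
          = 2 * (sgnSum b N s)^2 + 2 * (b N)^2 := by
      intro s hs
      rw [sgnSum_succ_notmem b N s (Finset.mem_powerset.1 hs),
        sgnSum_succ_mem b N s (Finset.mem_powerset.1 hs)]
      ring
    rw [Finset.sum_congr rfl this, Finset.sum_add_distrib, Finset.sum_const,
      ← Finset.mul_sum, ih, Finset.sum_range_succ, Finset.card_powerset,
      Finset.card_range]
    push_cast
    ring

open Finset in
lemma sum_quart_powerset_le (b : ℕ → ℝ) (N : ℕ) :
    ∑ s ∈ (range N).powerset, (sgnSum b N s)^4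
      ≤ 3 * 2^N * (∑ n ∈ range N, (b n)^2)^2 := by
  induction N with
  | zero => simp [sgnSum]
  | succ N ih =>
    rw [powerset_sum_succ]
    have he : ∀ s ∈ (range N).powerset,
        (sgnSum b (N+1) s)^4 + (sgnSum b (N+1) (insert N s))^4
          = 2 * (sgnSum b N s)^4 + 12 * (b N)^2 * (sgnSum b N s)^2 + 2 * (b N)^4 := by
      intro s hs
      rw [sgnSum_succ_notmem b N s (Finset.mem_powerset.1 hs),
        sgnSum_succ_mem b N s (Finset.mem_powerset.1 hs)]
      ring
    rw [Finset.sum_congr rfl he]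
    have h1 : ∑ s ∈ (range N).powerset,
        (2 * (sgnSum b N s)^4 + 12 * (b N)^2 * (sgnSum b N s)^2 + 2 * (b N)^4)
        = 2 * (∑ s ∈ (range N).powerset, (sgnSum b N s)^4)
          + 12 * (b N)^2 * (2^N * ∑ n ∈ range N, (b n)^2) + 2^N * (2 * (b N)^4) := by
      rw [Finset.sum_add_distrib, Finset.sum_add_distrib, ← Finset.mul_sum, ← Finset.mul_sum,
        sum_sq_powerset, Finset.sum_const, Finset.card_powerset, Finset.card_range,
        nsmul_eq_mul]
      push_cast; ring
    rw [h1, Finset.sum_range_succ]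
    have hps : (2:ℝ)^(N+1) = 2 * 2^N := by ring
    have hQ : (0:ℝ) ≤ ∑ n ∈ range N, (b n)^2 :=
      Finset.sum_nonneg fun n _ => sq_nonneg _
    have h2N : (0:ℝ) < 2^N := by positivity
    rw [hps]
    nlinarith [ih, mul_nonneg h2N.le (sq_nonneg ((b N)^2)),
      mul_nonneg (mul_nonneg h2N.le hQ) (sq_nonneg (b N))]

open Finset in

lemma khinchin (b : ℕ → ℝ) (N : ℕ) :
    2^N * Real.sqrt (∑ n ∈ range N, (b n)^2)
      ≤ Real.sqrt 3 * ∑ s ∈ (range N).powerset, |sgnSum b N s| := by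
  set Q : ℝ := ∑ n ∈ range N, (b n)^2 with hQdef
  have hQ0 : 0 ≤ Q := Finset.sum_nonneg fun n _ => sq_nonneg _
  set A : ℝ := ∑ s ∈ (range N).powerset, |sgnSum b N s| with hAdef
  have hA0 : 0 ≤ A := Finset.sum_nonneg fun s _ => abs_nonneg _
  rcases eq_or_lt_of_le hQ0 with hQz | hQpos
  · rw [← hQz, Real.sqrt_zero, mul_zero]
    positivity
  set M4 : ℝ := ∑ s ∈ (range N).powerset, (sgnSum b N s)^4 with hM4def
  have hM40 : 0 ≤ M4 := Finset.sum_nonneg fun s _ => by positivity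
  set M3 : ℝ := ∑ s ∈ (range N).powerset, |sgnSum b N s|^3 with hM3def
  have hM30 : 0 ≤ M3 := Finset.sum_nonneg fun s _ => by positivity
  set M2 : ℝ := ∑ s ∈ (range N).powerset, (sgnSum b N s)^2 with hM2def
  have hM2 : M2 = 2^N * Q := sum_sq_powerset b N
  have hM4le : M4 ≤ 3 * 2^N * Q^2 := sum_quart_powerset_le b N
  -- CS 1 : M2^2 ≤ A * M3
  have cs1 : M2^2 ≤ A * M3 := by
    have h := Finset.sum_mul_sq_le_sq_mul_sq (range N).powerset
      (fun s => Real.sqrt |sgnSum b N s|) (fun s => Real.sqrt |sgnSum b N s| ^ 3)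
    have e1 : ∀ s : Finset ℕ,
        Real.sqrt |sgnSum b N s| * Real.sqrt |sgnSum b N s| ^ 3 = (sgnSum b N s)^2 := by
      intro s
      have h2 : Real.sqrt |sgnSum b N s| ^ 2 = |sgnSum b N s| := Real.sq_sqrt (abs_nonneg _)
      calc Real.sqrt |sgnSum b N s| * Real.sqrt |sgnSum b N s| ^ 3
          = (Real.sqrt |sgnSum b N s| ^ 2)^2 := by ring
        _ = |sgnSum b N s|^2 := by rw [h2]
        _ = (sgnSum b N s)^2 := sq_abs _
    have e2 : ∀ s : Finset ℕ, Real.sqrt |sgnSum b N s| ^ 2 = |sgnSum b N s| :=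
      fun s => Real.sq_sqrt (abs_nonneg _)
    have e3 : ∀ s : Finset ℕ, (Real.sqrt |sgnSum b N s| ^ 3) ^ 2 = |sgnSum b N s|^3 := by
      intro s
      have h2 : Real.sqrt |sgnSum b N s| ^ 2 = |sgnSum b N s| := Real.sq_sqrt (abs_nonneg _)
      calc (Real.sqrt |sgnSum b N s| ^ 3) ^ 2 = (Real.sqrt |sgnSum b N s| ^ 2)^3 := by ring
        _ = |sgnSum b N s|^3 := by rw [h2]
    simp only [e1, e2, e3] at h
    exact h
  -- CS 2 : M3^2 ≤ M2 * M4
  have cs2 : M3^2 ≤ M2 * M4 := by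
    have h := Finset.sum_mul_sq_le_sq_mul_sq (range N).powerset
      (fun s => |sgnSum b N s|) (fun s => (sgnSum b N s)^2)
    have e1 : ∀ s : Finset ℕ, |sgnSum b N s| * (sgnSum b N s)^2 = |sgnSum b N s|^3 := by
      intro s
      rw [← sq_abs]; ring
    have e2 : ∀ s : Finset ℕ, |sgnSum b N s| ^ 2 = (sgnSum b N s)^2 := fun s => sq_abs _
    have e3 : ∀ s : Finset ℕ, ((sgnSum b N s)^2)^2 = (sgnSum b N s)^4 := fun s => by ring
    simp only [e1, e2, e3] at h
    exact h
  have h2N : (0:ℝ) < 2^N := by positivity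
  have hM2pos : 0 < M2 := by rw [hM2]; positivity
  -- combine : M2^3 ≤ A^2 * M4
  have hcomb : M2^3 ≤ A^2 * M4 := by
    have h4 : M2^4 ≤ A^2 * (M2 * M4) := by nlinarith [sq_nonneg A, sq_nonneg M3]
    nlinarith [hM2pos]
  -- substitute
  have key : 2^(2*N) * Q ≤ 3 * A^2 := by
    rw [hM2] at hcomb
    have hQ2 : (0:ℝ) < Q^2 := by positivity
    have := hcomb.trans (by nlinarith [sq_nonneg A] : A^2 * M4 ≤ A^2 * (3 * 2^N * Q^2))
    have hexp : (2:ℝ)^(2*N) = 2^N * 2^N := by rw [two_mul, pow_add]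
    rw [hexp]
    have h' : (2^N * Q)^3 = (2^N * 2^N * Q) * (2^N * Q^2) := by ring
    rw [h'] at this
    have h'' : A^2 * (3 * 2^N * Q^2) = (3 * A^2) * (2^N * Q^2) := by ring
    rw [h''] at this
    exact le_of_mul_le_mul_right this (by positivity)
  calc 2^N * Real.sqrt Q = Real.sqrt (2^(2*N) * Q) := by
        rw [Real.sqrt_mul (by positivity), two_mul, pow_add, Real.sqrt_mul_self h2N.le]
    _ ≤ Real.sqrt (3 * A^2) := Real.sqrt_le_sqrt key
    _ = Real.sqrt 3 * A := by
        rw [Real.sqrt_mul (by norm_num), Real.sqrt_sq hA0]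

/-- Proposition (B) ⇒ (A): if `(fₙ)` is an orthonormal system on `[0,1]` and the series
`∑ aₙ fₙ` converges unconditionally in `L¹[0,1]`, then the square function
`P = (∑ aₙ² fₙ²)^{1/2}` belongs to `L¹[0,1]` and `‖P‖₁ ≤ C · sup_ε ‖∑ εₙ aₙ fₙ‖₁`
for an absolute constant `C`. -/
theorem square_function_le_sup_signed_sums :
    ∃ C : ℝ, 0 < C ∧
      ∀ (f : ℕ → ℝ → ℝ) (a : ℕ → ℝ),
        (∀ m, Measurable (f m)) →
        (∀ m, IntegrableOn (fun x => (f m x)^2) (Set.Icc (0:ℝ) 1)) →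
        (∀ m, (∫ x in (0:ℝ)..1, (f m x)^2) = 1) →
        (∀ m m', m ≠ m' → (∫ x in (0:ℝ)..1, f m x * f m' x) = 0) →
        -- unconditional convergence in `L¹`:
        (∀ ε : ℕ → ℝ, (∀ n, ε n = 1 ∨ ε n = -1) →
          ∃ g : ℝ → ℝ, IntegrableOn g (Set.Icc (0:ℝ) 1) ∧
            Filter.Tendsto
              (fun N => ∫ x in Set.Icc (0:ℝ) 1,
                |g x - ∑ n ∈ Finset.range N, ε n * (a n * f n x)|)
              Filter.atTop (nhds 0)) →
        ∀ B : ℝ,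
          (∀ ε : ℕ → ℝ, (∀ n, ε n = 1 ∨ ε n = -1) →
            ∀ g : ℝ → ℝ,
              Filter.Tendsto
                (fun N => ∫ x in Set.Icc (0:ℝ) 1,
                  |g x - ∑ n ∈ Finset.range N, ε n * (a n * f n x)|)
                Filter.atTop (nhds 0) →
              (∫ x in Set.Icc (0:ℝ) 1, |g x|) ≤ B) →
          (∀ᵐ x ∂(volume.restrict (Set.Icc (0:ℝ) 1)), Summable (fun n => (a n * f n x)^2)) ∧
          IntegrableOn (fun x => Real.sqrt (∑' n, (a n * f n x)^2)) (Set.Icc (0:ℝ) 1) ∧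
          (∫ x in Set.Icc (0:ℝ) 1, Real.sqrt (∑' n, (a n * f n x)^2)) ≤ C * B := by
  refine ⟨2, by norm_num, ?_⟩
  intro f a hmeas hsqint _h1 _h2 huncond B hB
  set μ := volume.restrict (Set.Icc (0:ℝ) 1) with hμ
  have hIccfin : volume (Set.Icc (0:ℝ) 1) < ⊤ := by
    simp [Real.volume_Icc]
  -- B is nonnegative
  have hB0 : 0 ≤ B := by
    obtain ⟨g, hgint, hgt⟩ := huncond (fun _ => 1) (fun _ => Or.inl rfl)
    have := hB (fun _ => 1) (fun _ => Or.inl rfl) g hgt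
    exact le_trans (integral_nonneg fun x => abs_nonneg _) this
  -- integrability of each f m
  have hfint : ∀ m, IntegrableOn (f m) (Set.Icc (0:ℝ) 1) := by
    intro m
    have hbd : IntegrableOn (fun x => ((f m x)^2 + 1)/2) (Set.Icc (0:ℝ) 1) :=
      ((hsqint m).add (integrableOn_const hIccfin.ne)).div_const 2
    refine Integrable.mono' hbd (hmeas m).aestronglyMeasurable ?_
    filter_upwards with x
    rw [Real.norm_eq_abs]
    have h1 : (|f m x|)^2 = (f m x)^2 := sq_abs _
    nlinarith [sq_nonneg (|f m x| - 1), abs_nonneg (f m x)]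
  have haint : ∀ n, Integrable (fun x => a n * f n x) μ :=
    fun n => (hfint n).const_mul (a n)
  -- partial signed sums are integrable
  set T : ℕ → Finset ℕ → ℝ → ℝ :=
    fun N s x => ∑ n ∈ Finset.range N, (if n ∈ s then a n * f n x else -(a n * f n x)) with hT
  have hTint : ∀ N s, Integrable (T N s) μ := by
    intro N s
    apply integrable_finset_sum
    intro n _
    by_cases h : n ∈ s
    · simpa [h] using haint n
    · simp only [if_neg h]
      exact (haint n).neg
  -- partial sums with signs are integrable
  have hpint : ∀ (ε : ℕ → ℝ) M, Integrable (fun x => ∑ n ∈ Finset.range M, ε n * (a n * f n x)) μ := by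
    intro ε M
    apply integrable_finset_sum
    intro n _
    exact (haint n).const_mul (ε n)
  -- the key bound on signed partial sums
  have hTbound : ∀ N, ∀ s ∈ (Finset.range N).powerset, ∫ x, |T N s x| ∂μ ≤ B := by
    intro N s _hs
    set εp : ℕ → ℝ := fun n => if n < N then (if n ∈ s then (1:ℝ) else -1) else 1 with hεp
    set εm : ℕ → ℝ := fun n => if n < N then (if n ∈ s then (1:ℝ) else -1) else -1 with hεm
    have hεpsgn : ∀ n, εp n = 1 ∨ εp n = -1 := by
      intro n; by_cases h : n < N <;> by_cases h' : n ∈ s <;> simp [hεp, h, h']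
    have hεmsgn : ∀ n, εm n = 1 ∨ εm n = -1 := by
      intro n; by_cases h : n < N <;> by_cases h' : n ∈ s <;> simp [hεm, h, h']
    obtain ⟨gp, hgpint, hgp⟩ := huncond εp hεpsgn
    obtain ⟨gm, hgmint, hgm⟩ := huncond εm hεmsgn
    have hBp : ∫ x, |gp x| ∂μ ≤ B := hB εp hεpsgn gp hgp
    have hBm : ∫ x, |gm x| ∂μ ≤ B := hB εm hεmsgn gm hgm
    -- the averaged partial sums equal T N s for M ≥ N
    have hid : ∀ M, N ≤ M → ∀ x,
        (∑ n ∈ Finset.range M, εp n * (a n * f n x))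
          + (∑ n ∈ Finset.range M, εm n * (a n * f n x)) = 2 * T N s x := by
      intro M hM x
      rw [← Finset.sum_add_distrib]
      have h1 : ∑ n ∈ Finset.range M, (εp n * (a n * f n x) + εm n * (a n * f n x))
          = ∑ n ∈ Finset.range N, (εp n * (a n * f n x) + εm n * (a n * f n x)) := by
        refine (Finset.sum_subset (Finset.range_subset_range.2 hM) ?_).symm
        intro n _hn hn'
        have h2 : ¬ n < N := by simpa using hn'
        simp [hεp, hεm, h2]
      rw [h1, hT, Finset.mul_sum]
      refine Finset.sum_congr rfl ?_
      intro n hn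
      have h3 : n < N := Finset.mem_range.1 hn
      by_cases h' : n ∈ s <;> simp [hεp, hεm, h3, h'] <;> ring
    -- limit argument
    have hu : Tendsto (fun M => (∫ x, |gp x - ∑ n ∈ Finset.range M, εp n * (a n * f n x)| ∂μ)/2
        + (∫ x, |gm x - ∑ n ∈ Finset.range M, εm n * (a n * f n x)| ∂μ)/2 + B)
        atTop (nhds B) := by
      have := ((hgp.div_const 2).add (hgm.div_const 2)).add_const B
      simpa using this
    refine ge_of_tendsto hu ?_
    · filter_upwards [Filter.eventually_ge_atTop N] with M hM
      have habs : ∀ x, |T N s x| ≤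
          |gp x - ∑ n ∈ Finset.range M, εp n * (a n * f n x)|/2
          + |gm x - ∑ n ∈ Finset.range M, εm n * (a n * f n x)|/2
          + (|gp x| + |gm x|)/2 := by
        intro x
        have h4 := hid M hM x
        have : T N s x = -(gp x - ∑ n ∈ Finset.range M, εp n * (a n * f n x))/2
            + -(gm x - ∑ n ∈ Finset.range M, εm n * (a n * f n x))/2 + (gp x + gm x)/2 := by
          linarith [h4]
        rw [this]
        calc |(-(gp x - ∑ n ∈ Finset.range M, εp n * (a n * f n x)))/2
            + (-(gm x - ∑ n ∈ Finset.range M, εm n * (a n * f n x)))/2 + (gp x + gm x)/2|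
            ≤ |(-(gp x - ∑ n ∈ Finset.range M, εp n * (a n * f n x)))/2
            + (-(gm x - ∑ n ∈ Finset.range M, εm n * (a n * f n x)))/2| + |(gp x + gm x)/2| :=
              abs_add_le _ _
          _ ≤ (|(-(gp x - ∑ n ∈ Finset.range M, εp n * (a n * f n x)))/2|
            + |(-(gm x - ∑ n ∈ Finset.range M, εm n * (a n * f n x)))/2|) + |(gp x + gm x)/2| := by
              gcongr; exact abs_add_le _ _
          _ ≤ _ := by
              rw [abs_div, abs_div, abs_div, abs_neg, abs_neg]
              simp only [abs_two]
              gcongr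
              · exact abs_add_le _ _
      have hint1 : Integrable (fun x => |gp x - ∑ n ∈ Finset.range M, εp n * (a n * f n x)|) μ :=
        (hgpint.sub (hpint εp M)).abs
      have hint2 : Integrable (fun x => |gm x - ∑ n ∈ Finset.range M, εm n * (a n * f n x)|) μ :=
        (hgmint.sub (hpint εm M)).abs
      have hint3 : Integrable (fun x => |gp x|) μ := hgpint.abs
      have hint4 : Integrable (fun x => |gm x|) μ := hgmint.abs
      have hmono : ∫ x, |T N s x| ∂μ ≤ ∫ x,
          (|gp x - ∑ n ∈ Finset.range M, εp n * (a n * f n x)|/2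
          + |gm x - ∑ n ∈ Finset.range M, εm n * (a n * f n x)|/2
          + (|gp x| + |gm x|)/2) ∂μ := by
        refine integral_mono ((hTint N s).abs)
          (((hint1.div_const 2).add (hint2.div_const 2)).add ((hint3.add hint4).div_const 2))
          habs
      refine hmono.trans ?_
      have hI1 : Integrable (fun x => |gp x - ∑ n ∈ Finset.range M, εp n * (a n * f n x)|/2
          + |gm x - ∑ n ∈ Finset.range M, εm n * (a n * f n x)|/2) μ :=
        (hint1.div_const 2).add (hint2.div_const 2)
      have hI2 : Integrable (fun x => (|gp x| + |gm x|)/2) μ := (hint3.add hint4).div_const 2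
      rw [integral_add hI1 hI2, integral_add (hint1.div_const 2) (hint2.div_const 2),
        integral_div, integral_div, integral_div, integral_add hint3 hint4]
      linarith
  -- integrated Khinchin inequality
  have hkN : ∀ N, ∫⁻ x, ENNReal.ofReal
      (Real.sqrt (∑ n ∈ Finset.range N, (a n * f n x)^2)) ∂μ
        ≤ ENNReal.ofReal (Real.sqrt 3 * B) := by
    intro N
    set R : ℝ → ℝ :=
      fun x => (Real.sqrt 3 / 2^N) * ∑ s ∈ (Finset.range N).powerset, |T N s x| with hR
    have hRint : Integrable R μ :=
      (integrable_finset_sum _ (fun s _ => (hTint N s).abs)).const_mul _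
    have hRnn : ∀ x, 0 ≤ R x := fun x =>
      mul_nonneg (by positivity) (Finset.sum_nonneg fun s _ => abs_nonneg _)
    have h2N : (0:ℝ) < 2^N := by positivity
    have hpt : ∀ x, Real.sqrt (∑ n ∈ Finset.range N, (a n * f n x)^2) ≤ R x := by
      intro x
      have h : 2^N * Real.sqrt (∑ n ∈ Finset.range N, (a n * f n x)^2)
          ≤ Real.sqrt 3 * ∑ s ∈ (Finset.range N).powerset, |T N s x| :=
        khinchin (fun n => a n * f n x) N
      show Real.sqrt (∑ n ∈ Finset.range N, (a n * f n x)^2)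
        ≤ (Real.sqrt 3 / 2^N) * ∑ s ∈ (Finset.range N).powerset, |T N s x|
      rw [div_mul_eq_mul_div, le_div_iff₀ h2N]
      linarith
    have hint : ∫ x, R x ∂μ ≤ Real.sqrt 3 * B := by
      have e1 : ∫ x, R x ∂μ
          = (Real.sqrt 3 / 2^N) * ∑ s ∈ (Finset.range N).powerset, ∫ x, |T N s x| ∂μ := by
        show ∫ x, (Real.sqrt 3 / 2^N) * ∑ s ∈ (Finset.range N).powerset, |T N s x| ∂μ = _
        rw [integral_const_mul, integral_finset_sum _ (fun s _ => (hTint N s).abs)]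
      rw [e1]
      have e2 : ∑ s ∈ (Finset.range N).powerset, ∫ x, |T N s x| ∂μ ≤ 2^N * B := by
        have := Finset.sum_le_card_nsmul (Finset.range N).powerset
          (fun s => ∫ x, |T N s x| ∂μ) B (hTbound N)
        rwa [Finset.card_powerset, Finset.card_range, nsmul_eq_mul, Nat.cast_pow,
          Nat.cast_ofNat] at this
      calc (Real.sqrt 3 / 2^N) * ∑ s ∈ (Finset.range N).powerset, ∫ x, |T N s x| ∂μ
          ≤ (Real.sqrt 3 / 2^N) * (2^N * B) := by
            apply mul_le_mul_of_nonneg_left e2 (by positivity)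
        _ = Real.sqrt 3 * B := by field_simp
    calc ∫⁻ x, ENNReal.ofReal (Real.sqrt (∑ n ∈ Finset.range N, (a n * f n x)^2)) ∂μ
        ≤ ∫⁻ x, ENNReal.ofReal (R x) ∂μ :=
          lintegral_mono fun x => ENNReal.ofReal_le_ofReal (hpt x)
      _ = ENNReal.ofReal (∫ x, R x ∂μ) :=
          (ofReal_integral_eq_lintegral_ofReal hRint (Filter.Eventually.of_forall hRnn)).symm
      _ ≤ ENNReal.ofReal (Real.sqrt 3 * B) := ENNReal.ofReal_le_ofReal hint
  -- the monotone family of partial square functions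
  set Q : ℕ → ℝ → ℝ := fun N x => ∑ n ∈ Finset.range N, (a n * f n x)^2 with hQ
  have hQmeas : ∀ N, Measurable (Q N) := fun N =>
    Finset.measurable_sum _ (fun n _ => ((measurable_const.mul (hmeas n)).pow_const 2))
  have hQmono : ∀ x, Monotone (fun N => Q N x) := by
    intro x N M hNM
    exact Finset.sum_le_sum_of_subset_of_nonneg (Finset.range_subset_range.2 hNM)
      (fun n _ _ => sq_nonneg _)
  have hQnn : ∀ N x, 0 ≤ Q N x := fun N x => Finset.sum_nonneg fun n _ => sq_nonneg _
  set G : ℝ → ENNReal := fun x => ⨆ N, ENNReal.ofReal (Real.sqrt (Q N x)) with hG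
  have hGmeas : Measurable G :=
    Measurable.iSup (fun N => (Real.continuous_sqrt.measurable.comp (hQmeas N)).ennreal_ofReal)
  have hGmono : Monotone (fun N => fun x => ENNReal.ofReal (Real.sqrt (Q N x))) := by
    intro N M hNM x
    exact ENNReal.ofReal_le_ofReal (Real.sqrt_le_sqrt (hQmono x hNM))
  have hm : ∀ N, Measurable (fun x => ENNReal.ofReal (Real.sqrt (Q N x))) := by
    intro N
    exact (Real.continuous_sqrt.measurable.comp (hQmeas N)).ennreal_ofReal
  have hGint : ∫⁻ x, G x ∂μ ≤ ENNReal.ofReal (Real.sqrt 3 * B) := by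
    have e : ∫⁻ x, G x ∂μ = ⨆ N, ∫⁻ x, ENNReal.ofReal (Real.sqrt (Q N x)) ∂μ :=
      lintegral_iSup hm hGmono
    rw [e]
    exact iSup_le hkN
  have hGfin : ∀ᵐ x ∂μ, G x < ⊤ :=
    ae_lt_top hGmeas (hGint.trans_lt ENNReal.ofReal_lt_top).ne
  have hkey : ∀ᵐ x ∂μ, Summable (fun n => (a n * f n x)^2) ∧
      ENNReal.ofReal (Real.sqrt (∑' n, (a n * f n x)^2)) = G x := by
    filter_upwards [hGfin] with x hx
    have hub : ∀ N, Real.sqrt (Q N x) ≤ (G x).toReal := by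
      intro N
      have h1 : ENNReal.ofReal (Real.sqrt (Q N x)) ≤ G x :=
        le_iSup (fun N => ENNReal.ofReal (Real.sqrt (Q N x))) N
      exact (ENNReal.ofReal_le_iff_le_toReal hx.ne).1 h1
    have hsum : Summable (fun n => (a n * f n x)^2) := by
      apply summable_of_sum_range_le (c := ((G x).toReal)^2) (fun n => sq_nonneg _)
      intro N
      have h2 : Q N x = Real.sqrt (Q N x)^2 := (Real.sq_sqrt (hQnn N x)).symm
      calc ∑ n ∈ Finset.range N, (a n * f n x)^2 = Q N x := rfl
        _ = Real.sqrt (Q N x)^2 := h2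
        _ ≤ ((G x).toReal)^2 := pow_le_pow_left₀ (Real.sqrt_nonneg _) (hub N) 2
    refine ⟨hsum, ?_⟩
    have ht : Tendsto (fun N => Q N x) atTop (nhds (∑' n, (a n * f n x)^2)) :=
      hsum.hasSum.tendsto_sum_nat
    have ht2 : Tendsto (fun N => ENNReal.ofReal (Real.sqrt (Q N x))) atTop
        (nhds (ENNReal.ofReal (Real.sqrt (∑' n, (a n * f n x)^2)))) :=
      (ENNReal.continuous_ofReal.tendsto _).comp ((Real.continuous_sqrt.tendsto _).comp ht)
    have ht3 : Tendsto (fun N => ENNReal.ofReal (Real.sqrt (Q N x))) atTop (nhds (G x)) :=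
      tendsto_atTop_iSup (fun N M h => ENNReal.ofReal_le_ofReal (Real.sqrt_le_sqrt (hQmono x h)))
    exact tendsto_nhds_unique ht2 ht3
  have haemeas : AEStronglyMeasurable (fun x => Real.sqrt (∑' n, (a n * f n x)^2)) μ := by
    have heq : (fun x => Real.sqrt (∑' n, (a n * f n x)^2)) =ᵐ[μ] fun x => (G x).toReal := by
      filter_upwards [hkey] with x hx
      rw [← hx.2, ENNReal.toReal_ofReal (Real.sqrt_nonneg _)]
    exact (hGmeas.ennreal_toReal.aestronglyMeasurable).congr heq.symm
  have hlin : ∫⁻ x, ENNReal.ofReal (Real.sqrt (∑' n, (a n * f n x)^2)) ∂μ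
      ≤ ENNReal.ofReal (Real.sqrt 3 * B) := by
    have heq : ∫⁻ x, ENNReal.ofReal (Real.sqrt (∑' n, (a n * f n x)^2)) ∂μ = ∫⁻ x, G x ∂μ :=
      lintegral_congr_ae (by filter_upwards [hkey] with x hx using hx.2)
    rw [heq]; exact hGint
  have hintg : IntegrableOn (fun x => Real.sqrt (∑' n, (a n * f n x)^2)) (Set.Icc (0:ℝ) 1) := by
    refine ⟨haemeas, ?_⟩
    rw [hasFiniteIntegral_iff_ofReal (Filter.Eventually.of_forall fun x => Real.sqrt_nonneg _)]
    exact hlin.trans_lt ENNReal.ofReal_lt_top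
  refine ⟨?_, hintg, ?_⟩
  · filter_upwards [hkey] with x hx using hx.1
  · have e1 : ∫ x, Real.sqrt (∑' n, (a n * f n x)^2) ∂μ
        = (∫⁻ x, ENNReal.ofReal (Real.sqrt (∑' n, (a n * f n x)^2)) ∂μ).toReal :=
      integral_eq_lintegral_of_nonneg_ae
        (Filter.Eventually.of_forall fun x => Real.sqrt_nonneg _) haemeas
    rw [e1]
    have h3 : Real.sqrt 3 * B ≤ 2 * B := by
      have h4 : Real.sqrt 3 ≤ 2 := by
        nlinarith [Real.sq_sqrt (show (0:ℝ) ≤ 3 by norm_num), Real.sqrt_nonneg 3]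
      exact mul_le_mul_of_nonneg_right h4 hB0
    have h5 : (∫⁻ x, ENNReal.ofReal (Real.sqrt (∑' n, (a n * f n x)^2)) ∂μ).toReal
        ≤ Real.sqrt 3 * B :=
      ENNReal.toReal_le_of_le_ofReal (by positivity) hlin
    linarith
end
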